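/- arXiv:math/0511125 — 3 statements merged into one kernel-verified Lean document; each statement's English description precedes it below -/
import Mathlib

section
/- In the setting of Case A (n = 1): let G, F : cl(Δ)×M → ℂ be C¹, holomorphic in ζ on Δ for each t, with G (2,2)-regular and F = f ∘ G on bΣ = ∂Δ×M for a C¹ function f on Ω = G(bΣ). Define J(ζ,t) = iζ(∂_ζF ∂_tG − ∂_ζG ∂_tF) on cl(Δ)×M, so that J equals the Jacobian ∂(F,G)/∂(ψ,t) on bΣ. Then: (1) J(0,t) = 0 for all t ∈ M; (2) the zero set J⁻¹(0) ∩ bΣ contains the critical set Crit(G) = {det[∇G, ∇Ḡ] = 0} ⊂ bΣ; (3) at every point of bΣ where J ≠ 0, one has J/J̄ = σ ∘ G with σ = −(∂̄f)/conj(∂̄f). -/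
/-!
STATEMENT 11: In the setting of Case A (n = 1): let G, F : cl(Δ)×M → ℂ be C¹, holomorphic
in ζ on Δ for each t, with G (2,2)-regular and F = f ∘ G on bΣ = ∂Δ×M for a C¹ function f
on Ω = G(bΣ).  Define J(ζ,t) = iζ(∂_ζF ∂_tG − ∂_ζG ∂_tF) on cl(Δ)×M, so that J equals the
Jacobian ∂(F,G)/∂(ψ,t) on bΣ.  Then:
(1) J(0,t) = 0 for all t ∈ M;
(2) the zero set J⁻¹(0) ∩ bΣ contains the critical set Crit(G) = {det[∇G,∇Ḡ] = 0} ⊂ bΣ;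
(3) at every point of bΣ where J ≠ 0, one has J/J̄ = σ ∘ G with σ = −(∂̄f)/conj(∂̄f).
(M = S¹ or [0,1] is described by the real local coordinate t; ψ is the angular coordinate
on ∂Δ, ζ = e^{iψ}, and ∇ = (∂_ψ, ∂_t).)
-/

noncomputable section

/-- Restriction of a function on `cl(Δ) × M` to `bΣ = ∂Δ × M`, in coordinates `(ψ, t)`. -/
def bmap (u : ℂ × ℝ → ℂ) : ℝ × ℝ → ℂ :=
  fun p => u (Complex.exp (p.1 * Complex.I), p.2)

/-- `∂_ψ` on `bΣ`. -/
def Dpsi (u : ℝ × ℝ → ℂ) (p : ℝ × ℝ) : ℂ := fderiv ℝ u p (1, 0)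

/-- `∂_t` on `bΣ`. -/
def Dt (u : ℝ × ℝ → ℂ) (p : ℝ × ℝ) : ℂ := fderiv ℝ u p (0, 1)

/-- `det[∇u, ∇v] = (∂_ψ u)(∂_t v) − (∂_t u)(∂_ψ v)`. -/
def det2 (u v : ℝ × ℝ → ℂ) (p : ℝ × ℝ) : ℂ :=
  Dpsi u p * Dt v p - Dt u p * Dpsi v p

/-- Wirtinger derivative `∂̄f = ½(∂ₓ + i∂_y)f`. -/
def wirDzbar (f : ℂ → ℂ) (z : ℂ) : ℂ :=
  (fderiv ℝ f z 1 + Complex.I * fderiv ℝ f z Complex.I) / 2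

/-- The function `J(ζ,t) = iζ(∂_ζF ∂_tG − ∂_ζG ∂_tF)` (the complex derivative `∂_ζ` being
realized as the real directional derivative in the direction `1`, and `∂_t` as the
directional derivative in the direction `(0,1)`). -/
def Jfun (F G : ℂ × ℝ → ℂ) (p : ℂ × ℝ) : ℂ :=
  Complex.I * p.1 *
    (fderiv ℝ F p (1, 0) * fderiv ℝ G p (0, 1) - fderiv ℝ G p (1, 0) * fderiv ℝ F p (0, 1))

/-- `(2,2)`-regularity of `G : cl(Δ) × M → ℂ` (in the coordinates `(ζ, t)`):
`rank dG = 2` on `Σ = Δ × M`; on `bΣ` the rank of `G|_{bΣ}` is `2` away from the critical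
set `Crit(G) = {det[∇G,∇Ḡ] = 0}` (which is automatic), the rank is exactly `1` on
`Crit(G)`, and `G(Crit(G))` is contained in the boundary of `Ω = G(bΣ)`. -/
def Reg22 (G : ℂ × ℝ → ℂ) : Prop :=
  (∀ p : ℂ × ℝ, p.1 ∈ Metric.ball (0 : ℂ) 1 → Function.Surjective (fderiv ℝ G p)) ∧
  (∀ p : ℝ × ℝ, det2 (bmap G) (fun q => (starRingEnd ℂ) (bmap G q)) p = 0 →
    fderiv ℝ (bmap G) p ≠ 0 ∧ bmap G p ∈ frontier (Set.range (bmap G)))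



/-- Derivative of the boundary parametrization `(ψ, t) ↦ (e^{iψ}, t)`. -/
lemma e_hasFDeriv (p : ℝ × ℝ) :
    HasFDerivAt (fun p : ℝ × ℝ => ((Complex.exp (p.1 * Complex.I), p.2) : ℂ × ℝ))
      ((Complex.exp (↑p.1 * Complex.I) • Complex.I •
          Complex.ofRealCLM.comp (ContinuousLinearMap.fst ℝ ℝ ℝ)).prod
        (ContinuousLinearMap.snd ℝ ℝ ℝ)) p := by
  have h1 : HasFDerivAt (fun p : ℝ × ℝ => ((p.1 : ℝ) : ℂ))
      (Complex.ofRealCLM.comp (ContinuousLinearMap.fst ℝ ℝ ℝ)) p :=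
    Complex.ofRealCLM.hasFDerivAt.comp p hasFDerivAt_fst
  have h2 := h1.mul_const Complex.I
  have h3 := (Complex.hasDerivAt_exp ((p.1 : ℂ) * Complex.I)).comp_hasFDerivAt p h2
  exact HasFDerivAt.prodMk h3 hasFDerivAt_snd

/-- Chain rule for `bmap`. -/
lemma bmap_fderiv (u : ℂ × ℝ → ℂ) (hu : ContDiff ℝ 1 u) (p : ℝ × ℝ) :
    Dpsi (bmap u) p
      = fderiv ℝ u (Complex.exp (p.1 * Complex.I), p.2) (Complex.exp (p.1 * Complex.I) * Complex.I, 0)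
    ∧ Dt (bmap u) p
      = fderiv ℝ u (Complex.exp (p.1 * Complex.I), p.2) (0, 1) := by
  have h5 := ((hu.differentiable one_ne_zero) _).hasFDerivAt.comp p (e_hasFDeriv p)
  have h6 : fderiv ℝ (bmap u) p = _ := h5.fderiv
  refine ⟨?_, ?_⟩
  · show fderiv ℝ (bmap u) p (1, 0) = _
    rw [h6]; simp [mul_comm]
  · show fderiv ℝ (bmap u) p (0, 1) = _
    rw [h6]; simp

lemma bmap_differentiableAt (u : ℂ × ℝ → ℂ) (hu : ContDiff ℝ 1 u) (p : ℝ × ℝ) :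
    DifferentiableAt ℝ (bmap u) p :=
  (((hu.differentiable one_ne_zero) _).hasFDerivAt.comp p (e_hasFDeriv p)).differentiableAt

/-- ℂ-linearity of the boundary differential in the `ζ`-direction, by continuity from Δ. -/
lemma clin (u : ℂ × ℝ → ℂ) (hu : ContDiff ℝ 1 u)
    (huhol : ∀ t, DifferentiableOn ℂ (fun z => u (z, t)) (Metric.ball 0 1))
    (z : ℂ) (hz : ‖z‖ = 1) (t : ℝ) (w : ℂ) :
    fderiv ℝ u (z, t) (w, 0) = w * fderiv ℝ u (z, t) (1, 0) := by
  set φ : ℂ × ℝ → ℂ := fun q => fderiv ℝ u q (w, 0) - w * fderiv ℝ u q (1, 0) with hφ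
  have hcf : Continuous (fderiv ℝ u) := hu.continuous_fderiv one_ne_zero
  have hφc : Continuous φ := by
    apply Continuous.sub
    · exact (ContinuousLinearMap.apply ℝ ℂ ((w, 0) : ℂ × ℝ)).continuous.comp hcf
    · exact continuous_const.mul
        ((ContinuousLinearMap.apply ℝ ℂ ((1, 0) : ℂ × ℝ)).continuous.comp hcf)
  have hzero : Set.EqOn φ 0 (Metric.ball (0:ℂ) 1 ×ˢ (Set.univ : Set ℝ)) := by
    rintro ⟨ζ, s⟩ ⟨hζ, -⟩
    have hsl : DifferentiableAt ℂ (fun x : ℂ => u (x, s)) ζ :=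
      (huhol s).differentiableAt (Metric.isOpen_ball.mem_nhds hζ)
    have hι : HasFDerivAt (fun x : ℂ => ((x, s) : ℂ × ℝ))
        (ContinuousLinearMap.inl ℝ ℂ ℝ) ζ := hasFDerivAt_prodMk_left ζ s
    have hcomp : fderiv ℝ (fun x : ℂ => u (x, s)) ζ
        = (fderiv ℝ u (ζ, s)).comp (ContinuousLinearMap.inl ℝ ℂ ℝ) :=
      (((hu.differentiable one_ne_zero) (ζ, s)).hasFDerivAt.comp ζ hι).fderiv
    have hlin : ∀ v : ℂ, fderiv ℝ (fun x : ℂ => u (x, s)) ζ v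
        = v * fderiv ℝ (fun x : ℂ => u (x, s)) ζ 1 := by
      intro v
      rw [hsl.fderiv_restrictScalars ℝ]
      have h := (fderiv ℂ (fun x : ℂ => u (x, s)) ζ).map_smul v 1
      simp only [smul_eq_mul, mul_one] at h
      simpa [ContinuousLinearMap.coe_restrictScalars'] using h
    have h1 : fderiv ℝ u (ζ, s) (w, 0) = fderiv ℝ (fun x : ℂ => u (x, s)) ζ w := by
      rw [hcomp]; simp
    have h2 : fderiv ℝ u (ζ, s) (1, 0) = fderiv ℝ (fun x : ℂ => u (x, s)) ζ 1 := by
      rw [hcomp]; simp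
    show φ (ζ, s) = 0
    rw [hφ]
    simp only [h1, h2, hlin w, sub_self]
  have hcl : (z, t) ∈ closure (Metric.ball (0:ℂ) 1 ×ˢ (Set.univ : Set ℝ)) := by
    rw [closure_prod_eq, closure_ball (0:ℂ) one_ne_zero]
    exact ⟨by simpa [Metric.mem_closedBall] using hz.le, by simp⟩
  have h0 : φ (z, t) = 0 := (hzero.closure hφc continuous_const) hcl
  exact sub_eq_zero.mp h0

/-- Wirtinger decomposition of a real differential on ℂ. -/
lemma wirt (f : ℂ → ℂ) (z : ℂ) (w : ℂ) :
    fderiv ℝ f z w = ((fderiv ℝ f z 1 - Complex.I * fderiv ℝ f z Complex.I) / 2) * w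
      + wirDzbar f z * (starRingEnd ℂ) w := by
  set L := fderiv ℝ f z
  have hw : w = (w.re : ℝ) • (1 : ℂ) + (w.im : ℝ) • Complex.I := by
    simp [Complex.real_smul, Complex.re_add_im]
  have hLw : L w = (w.re : ℂ) * L 1 + (w.im : ℂ) * L Complex.I := by
    conv_lhs => rw [hw]
    rw [map_add, map_smul, map_smul]
    simp [Complex.real_smul]
  have hcw : (starRingEnd ℂ) w = (w.re : ℂ) - (w.im : ℂ) * Complex.I := by
    simp [Complex.ext_iff]
  have hww : w = (w.re : ℂ) + (w.im : ℂ) * Complex.I := (Complex.re_add_im w).symm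
  rw [wirDzbar, hLw, hcw]
  rw [show ((fderiv ℝ f z 1 - Complex.I * fderiv ℝ f z Complex.I) / 2) * w
      = ((L 1 - Complex.I * L Complex.I) / 2) * ((w.re : ℂ) + (w.im : ℂ) * Complex.I) by
    rw [← hww]]
  have hI : Complex.I * Complex.I = -1 := Complex.I_mul_I
  linear_combination ((w.im : ℂ) * L Complex.I) * hI

lemma norm_exp_boundary (ψ : ℝ) : ‖Complex.exp (ψ * Complex.I)‖ = 1 := by
  rw [Complex.norm_exp]
  simp

/-- `J = det2(bmap F, bmap G)` on the boundary. -/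
lemma claim0 (F G : ℂ × ℝ → ℂ) (hF : ContDiff ℝ 1 F) (hG : ContDiff ℝ 1 G)
    (hFhol : ∀ t, DifferentiableOn ℂ (fun z => F (z, t)) (Metric.ball 0 1))
    (hGhol : ∀ t, DifferentiableOn ℂ (fun z => G (z, t)) (Metric.ball 0 1))
    (p : ℝ × ℝ) :
    Jfun F G (Complex.exp (p.1 * Complex.I), p.2) = det2 (bmap F) (bmap G) p := by
  obtain ⟨hF1, hF2⟩ := bmap_fderiv F hF p
  obtain ⟨hG1, hG2⟩ := bmap_fderiv G hG p
  have hz := norm_exp_boundary p.1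
  rw [det2, hF1, hF2, hG1, hG2,
    clin F hF hFhol _ hz p.2 _, clin G hG hGhol _ hz p.2 _, Jfun]
  ring

/-- The conjugate of the critical determinant is its negative. -/
lemma detconj (G : ℂ × ℝ → ℂ) (hG : ContDiff ℝ 1 G) (p : ℝ × ℝ) :
    (starRingEnd ℂ) (det2 (bmap G) (fun q => (starRingEnd ℂ) (bmap G q)) p)
      = - det2 (bmap G) (fun q => (starRingEnd ℂ) (bmap G q)) p := by
  have hdG := bmap_differentiableAt G hG p
  have hc : HasFDerivAt (fun q => (starRingEnd ℂ) (bmap G q))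
      ((Complex.conjCLE.toContinuousLinearMap).comp (fderiv ℝ (bmap G) p)) p :=
    Complex.conjCLE.toContinuousLinearMap.hasFDerivAt.comp p hdG.hasFDerivAt
  have h1 : Dpsi (fun q => (starRingEnd ℂ) (bmap G q)) p
      = (starRingEnd ℂ) (Dpsi (bmap G) p) := by
    show fderiv ℝ (fun q => (starRingEnd ℂ) (bmap G q)) p (1, 0) = _
    rw [hc.fderiv]; rfl
  have h2 : Dt (fun q => (starRingEnd ℂ) (bmap G q)) p
      = (starRingEnd ℂ) (Dt (bmap G) p) := by
    show fderiv ℝ (fun q => (starRingEnd ℂ) (bmap G q)) p (0, 1) = _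
    rw [hc.fderiv]; rfl
  rw [det2, h1, h2]
  simp only [map_sub, map_mul, Complex.conj_conj]
  ring

/-- `J = −(∂̄f ∘ bmap G) · det2(bmap G, conj(bmap G))` on the boundary. -/
lemma Jeq (G F : ℂ × ℝ → ℂ) (f : ℂ → ℂ)
    (hG : ContDiff ℝ 1 G) (hF : ContDiff ℝ 1 F) (hf : ContDiff ℝ 1 f)
    (hGhol : ∀ t, DifferentiableOn ℂ (fun z => G (z, t)) (Metric.ball 0 1))
    (hFhol : ∀ t, DifferentiableOn ℂ (fun z => F (z, t)) (Metric.ball 0 1))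
    (hFG : ∀ p : ℝ × ℝ, bmap F p = f (bmap G p)) (p : ℝ × ℝ) :
    Jfun F G (Complex.exp (p.1 * Complex.I), p.2)
      = -(wirDzbar f (bmap G p))
          * det2 (bmap G) (fun q => (starRingEnd ℂ) (bmap G q)) p := by
  rw [claim0 F G hF hG hFhol hGhol p]
  have hdG := bmap_differentiableAt G hG p
  have hBF : bmap F = fun q => f (bmap G q) := funext hFG
  have hcomp : fderiv ℝ (bmap F) p
      = (fderiv ℝ f (bmap G p)).comp (fderiv ℝ (bmap G) p) := by
    rw [hBF]
    exact fderiv_comp p ((hf.differentiable one_ne_zero) _) hdG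
  have hc : HasFDerivAt (fun q => (starRingEnd ℂ) (bmap G q))
      ((Complex.conjCLE.toContinuousLinearMap).comp (fderiv ℝ (bmap G) p)) p :=
    Complex.conjCLE.toContinuousLinearMap.hasFDerivAt.comp p hdG.hasFDerivAt
  have h1c : Dpsi (fun q => (starRingEnd ℂ) (bmap G q)) p
      = (starRingEnd ℂ) (Dpsi (bmap G) p) := by
    show fderiv ℝ (fun q => (starRingEnd ℂ) (bmap G q)) p (1, 0) = _
    rw [hc.fderiv]; rfl
  have h2c : Dt (fun q => (starRingEnd ℂ) (bmap G q)) p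
      = (starRingEnd ℂ) (Dt (bmap G) p) := by
    show fderiv ℝ (fun q => (starRingEnd ℂ) (bmap G q)) p (0, 1) = _
    rw [hc.fderiv]; rfl
  set a := Dpsi (bmap G) p
  set b := Dt (bmap G) p
  set c := ((fderiv ℝ f (bmap G p) 1 - Complex.I * fderiv ℝ f (bmap G p) Complex.I) / 2)
  set d := wirDzbar f (bmap G p)
  have h1F : Dpsi (bmap F) p = c * a + d * (starRingEnd ℂ) a := by
    show fderiv ℝ (bmap F) p (1, 0) = _
    rw [hcomp]
    exact wirt f (bmap G p) a
  have h2F : Dt (bmap F) p = c * b + d * (starRingEnd ℂ) b := by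
    show fderiv ℝ (bmap F) p (0, 1) = _
    rw [hcomp]
    exact wirt f (bmap G p) b
  rw [det2, det2, h1F, h2F, h1c, h2c]
  ring

theorem stmt_11 (G F : ℂ × ℝ → ℂ) (f : ℂ → ℂ)
    (hG : ContDiff ℝ 1 G) (hF : ContDiff ℝ 1 F) (hf : ContDiff ℝ 1 f)
    -- holomorphic in ζ on Δ for each t
    (hGhol : ∀ t, DifferentiableOn ℂ (fun z => G (z, t)) (Metric.ball 0 1))
    (hFhol : ∀ t, DifferentiableOn ℂ (fun z => F (z, t)) (Metric.ball 0 1))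
    -- G is (2,2)-regular
    (hreg : Reg22 G)
    -- F = f ∘ G on bΣ
    (hFG : ∀ p : ℝ × ℝ, bmap F p = f (bmap G p)) :
    -- J equals the Jacobian ∂(F,G)/∂(ψ,t) on bΣ
    (∀ p : ℝ × ℝ, Jfun F G (Complex.exp (p.1 * Complex.I), p.2) = det2 (bmap F) (bmap G) p) ∧
    -- (1)
    (∀ t : ℝ, Jfun F G (0, t) = 0) ∧
    -- (2)
    (∀ p : ℝ × ℝ, det2 (bmap G) (fun q => (starRingEnd ℂ) (bmap G q)) p = 0 →
      Jfun F G (Complex.exp (p.1 * Complex.I), p.2) = 0) ∧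
    -- (3)
    (∀ p : ℝ × ℝ, Jfun F G (Complex.exp (p.1 * Complex.I), p.2) ≠ 0 →
      Jfun F G (Complex.exp (p.1 * Complex.I), p.2) /
          (starRingEnd ℂ) (Jfun F G (Complex.exp (p.1 * Complex.I), p.2)) =
        -(wirDzbar f (bmap G p)) / (starRingEnd ℂ) (wirDzbar f (bmap G p))) := by
  refine ⟨fun p => claim0 F G hF hG hFhol hGhol p, fun t => by simp [Jfun], ?_, ?_⟩
  · intro p hp
    rw [Jeq G F f hG hF hf hGhol hFhol hFG p, hp, mul_zero]
  · intro p hJ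
    have hJe := Jeq G F f hG hF hf hGhol hFhol hFG p
    set d := wirDzbar f (bmap G p) with hd
    set D := det2 (bmap G) (fun q => (starRingEnd ℂ) (bmap G q)) p with hD
    have hDne : D ≠ 0 := by
      intro h
      exact hJ (by rw [hJe, h, mul_zero])
    have hDc : (starRingEnd ℂ) D = -D := by
      rw [hD]; exact detconj G hG p
    have hconjJ : (starRingEnd ℂ) (Jfun F G (Complex.exp (p.1 * Complex.I), p.2))
        = (starRingEnd ℂ) d * D := by
      rw [hJe, map_mul, map_neg, hDc]
      ring
    rw [hconjJ, hJe, mul_div_mul_right _ _ hDne, neg_div]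


end
end

section
/- Let M be a 3-manifold with local coordinates t₁, t₂, t₃, let G₁, G₂, F : Δ×M → ℂ be C¹ functions holomorphic in ζ for each fixed t, with G₁, G₂ nonconstant in ζ, and consider the 4×3 Jacobi matrix with columns ∇G₁, ∇G₂, ∇F and rows ∂_ψ, ∂_{t₁}, ∂_{t₂}, ∂_{t₃} (ψ the angular variable, ζ = re^{iψ}). Let J⁰ be the 3×3 minor obtained by deleting the ∂_ψ row and J^k (k = 1,2,3) the minor obtained by deleting the ∂_{t_k} row. If J¹ ≡ J² ≡ J³ ≡ 0 on Δ×M, then J⁰ ≡ 0 on Δ×M. -/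
/-!
STATEMENT 12: Let M be a 3-manifold with local coordinates t₁, t₂, t₃ (we work in the
coordinates, i.e. on Δ × ℝ³), let G₁, G₂, F : Δ×M → ℂ be C¹ functions holomorphic in ζ for
each fixed t, with G₁, G₂ nonconstant in ζ, and consider the 4×3 Jacobi matrix with columns
∇G₁, ∇G₂, ∇F and rows ∂_ψ, ∂_{t₁}, ∂_{t₂}, ∂_{t₃} (ψ the angular variable, ζ = re^{iψ};
on functions holomorphic in ζ, ∂_ψ = iζ∂_ζ).  Let J⁰ be the 3×3 minor obtained by deleting
the ∂_ψ row and J^k (k = 1,2,3) the minor obtained by deleting the ∂_{t_k} row.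
If J¹ ≡ J² ≡ J³ ≡ 0 on Δ×M, then J⁰ ≡ 0 on Δ×M.
-/

noncomputable section

/-- `∂_ψ = iζ∂_ζ` acting on a function of `(ζ, t) ∈ ℂ × ℝ³` which is holomorphic in `ζ`
(the complex derivative `∂_ζ` is realized as the real directional derivative in the
direction `1`). -/
def dPsi (u : ℂ × (ℝ × ℝ × ℝ) → ℂ) (p : ℂ × (ℝ × ℝ × ℝ)) : ℂ :=
  Complex.I * p.1 * fderiv ℝ u p (1, 0, 0, 0)

/-- `∂_{t₁}`. -/
def dT1 (u : ℂ × (ℝ × ℝ × ℝ) → ℂ) (p : ℂ × (ℝ × ℝ × ℝ)) : ℂ := fderiv ℝ u p (0, 1, 0, 0)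

/-- `∂_{t₂}`. -/
def dT2 (u : ℂ × (ℝ × ℝ × ℝ) → ℂ) (p : ℂ × (ℝ × ℝ × ℝ)) : ℂ := fderiv ℝ u p (0, 0, 1, 0)

/-- `∂_{t₃}`. -/
def dT3 (u : ℂ × (ℝ × ℝ × ℝ) → ℂ) (p : ℂ × (ℝ × ℝ × ℝ)) : ℂ := fderiv ℝ u p (0, 0, 0, 1)

/-- The 3×3 minor of the 4×3 Jacobi matrix `[∇G₁, ∇G₂, ∇F]` formed by the three rows
`r₁, r₂, r₃` (each row being one of the derivations `∂_ψ, ∂_{t₁}, ∂_{t₂}, ∂_{t₃}`). -/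
def minor3 (r₁ r₂ r₃ : (ℂ × (ℝ × ℝ × ℝ) → ℂ) → ℂ × (ℝ × ℝ × ℝ) → ℂ)
    (G₁ G₂ F : ℂ × (ℝ × ℝ × ℝ) → ℂ) (p : ℂ × (ℝ × ℝ × ℝ)) : ℂ :=
  (!![r₁ G₁ p, r₁ G₂ p, r₁ F p;
      r₂ G₁ p, r₂ G₂ p, r₂ F p;
      r₃ G₁ p, r₃ G₂ p, r₃ F p]).det

lemma minor3_eq (r₁ r₂ r₃ : (ℂ × (ℝ × ℝ × ℝ) → ℂ) → ℂ × (ℝ × ℝ × ℝ) → ℂ)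
    (G₁ G₂ F : ℂ × (ℝ × ℝ × ℝ) → ℂ) (p : ℂ × (ℝ × ℝ × ℝ)) :
    minor3 r₁ r₂ r₃ G₁ G₂ F p
      = r₁ G₁ p * (r₂ G₂ p * r₃ F p - r₂ F p * r₃ G₂ p)
      - r₁ G₂ p * (r₂ G₁ p * r₃ F p - r₂ F p * r₃ G₁ p)
      + r₁ F p * (r₂ G₁ p * r₃ G₂ p - r₂ G₂ p * r₃ G₁ p) := by
  simp [minor3, Matrix.det_fin_three]; ring

lemma cofact (G₁ G₂ F : ℂ × (ℝ × ℝ × ℝ) → ℂ) (p : ℂ × (ℝ × ℝ × ℝ)) :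
    dPsi G₁ p * minor3 dT1 dT2 dT3 G₁ G₂ F p
  = dT1 G₁ p * minor3 dPsi dT2 dT3 G₁ G₂ F p
  - dT2 G₁ p * minor3 dPsi dT1 dT3 G₁ G₂ F p
  + dT3 G₁ p * minor3 dPsi dT1 dT2 G₁ G₂ F p := by
  simp only [minor3_eq]; ring

lemma cont_minor (G₁ G₂ F : ℂ × (ℝ × ℝ × ℝ) → ℂ)
    (hG₁ : ContDiffOn ℝ 1 G₁ (Metric.ball (0 : ℂ) 1 ×ˢ Set.univ))
    (hG₂ : ContDiffOn ℝ 1 G₂ (Metric.ball (0 : ℂ) 1 ×ˢ Set.univ))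
    (hF : ContDiffOn ℝ 1 F (Metric.ball (0 : ℂ) 1 ×ˢ Set.univ)) :
    ContinuousOn (minor3 dT1 dT2 dT3 G₁ G₂ F)
      (Metric.ball (0 : ℂ) 1 ×ˢ (Set.univ : Set (ℝ × ℝ × ℝ))) := by
  have hS : IsOpen (Metric.ball (0 : ℂ) 1 ×ˢ (Set.univ : Set (ℝ × ℝ × ℝ))) :=
    Metric.isOpen_ball.prod isOpen_univ
  have h : ∀ (u : ℂ × (ℝ × ℝ × ℝ) → ℂ),
      ContDiffOn ℝ 1 u (Metric.ball (0 : ℂ) 1 ×ˢ Set.univ) →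
      ∀ v : ℂ × (ℝ × ℝ × ℝ), ContinuousOn (fun p => fderiv ℝ u p v)
        (Metric.ball (0 : ℂ) 1 ×ˢ (Set.univ : Set (ℝ × ℝ × ℝ))) := fun u hu v =>
    (hu.continuousOn_fderiv_of_isOpen hS le_rfl).clm_apply continuousOn_const
  have he : minor3 dT1 dT2 dT3 G₁ G₂ F = fun p =>
      dT1 G₁ p * (dT2 G₂ p * dT3 F p - dT2 F p * dT3 G₂ p)
      - dT1 G₂ p * (dT2 G₁ p * dT3 F p - dT2 F p * dT3 G₁ p)
      + dT1 F p * (dT2 G₁ p * dT3 G₂ p - dT2 G₂ p * dT3 G₁ p) :=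
    funext (minor3_eq dT1 dT2 dT3 G₁ G₂ F)
  rw [he]
  simp only [dT1, dT2, dT3]
  refine ContinuousOn.add (ContinuousOn.sub ?_ ?_) ?_
  · exact (h G₁ hG₁ _).mul (((h G₂ hG₂ _).mul (h F hF _)).sub ((h F hF _).mul (h G₂ hG₂ _)))
  · exact (h G₂ hG₂ _).mul (((h G₁ hG₁ _).mul (h F hF _)).sub ((h F hF _).mul (h G₁ hG₁ _)))
  · exact (h F hF _).mul (((h G₁ hG₁ _).mul (h G₂ hG₂ _)).sub ((h G₂ hG₂ _).mul (h G₁ hG₁ _)))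

-- key: ∂ψ G₁ as deriv of the slice
lemma dPsi_eq (G₁ : ℂ × (ℝ × ℝ × ℝ) → ℂ)
    (hG₁ : ContDiffOn ℝ 1 G₁ (Metric.ball (0 : ℂ) 1 ×ˢ Set.univ))
    (hG₁hol : ∀ t, DifferentiableOn ℂ (fun z => G₁ (z, t)) (Metric.ball 0 1))
    (t : ℝ × ℝ × ℝ) {z : ℂ} (hz : z ∈ Metric.ball (0 : ℂ) 1) :
    fderiv ℝ G₁ (z, t) (1, 0, 0, 0) = deriv (fun z => G₁ (z, t)) z := by
  have hS : IsOpen (Metric.ball (0 : ℂ) 1 ×ˢ (Set.univ : Set (ℝ × ℝ × ℝ))) :=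
    Metric.isOpen_ball.prod isOpen_univ
  have hd : DifferentiableAt ℂ (fun z => G₁ (z, t)) z :=
    (hG₁hol t).differentiableAt (Metric.isOpen_ball.mem_nhds hz)
  have hG₁d : DifferentiableAt ℝ G₁ (z, t) :=
    ((hG₁.differentiableOn one_ne_zero).differentiableAt
      (hS.mem_nhds ⟨hz, Set.mem_univ t⟩))
  have hcomp : HasFDerivAt (fun w : ℂ => G₁ (w, t))
      ((fderiv ℝ G₁ (z, t)).comp (ContinuousLinearMap.inl ℝ ℂ (ℝ × ℝ × ℝ))) z :=
    hG₁d.hasFDerivAt.comp z (hasFDerivAt_prodMk_left z t)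
  have h2 : HasFDerivAt (fun w : ℂ => G₁ (w, t))
      ((fderiv ℂ (fun z => G₁ (z, t)) z).restrictScalars ℝ) z :=
    hd.hasFDerivAt.restrictScalars ℝ
  have he := hcomp.unique h2
  have : ((fderiv ℝ G₁ (z, t)).comp (ContinuousLinearMap.inl ℝ ℂ (ℝ × ℝ × ℝ))) 1
      = ((fderiv ℂ (fun z => G₁ (z, t)) z).restrictScalars ℝ) 1 := by rw [he]
  simpa [fderiv_apply_one_eq_deriv, Prod.mk_zero_zero] using this

theorem stmt_12 (G₁ G₂ F : ℂ × (ℝ × ℝ × ℝ) → ℂ)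
    -- C¹ on Δ × M
    (hG₁ : ContDiffOn ℝ 1 G₁ (Metric.ball (0 : ℂ) 1 ×ˢ Set.univ))
    (hG₂ : ContDiffOn ℝ 1 G₂ (Metric.ball (0 : ℂ) 1 ×ˢ Set.univ))
    (hF : ContDiffOn ℝ 1 F (Metric.ball (0 : ℂ) 1 ×ˢ Set.univ))
    -- holomorphic in ζ for each fixed t
    (hG₁hol : ∀ t, DifferentiableOn ℂ (fun z => G₁ (z, t)) (Metric.ball 0 1))
    (hG₂hol : ∀ t, DifferentiableOn ℂ (fun z => G₂ (z, t)) (Metric.ball 0 1))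
    (hFhol : ∀ t, DifferentiableOn ℂ (fun z => F (z, t)) (Metric.ball 0 1))
    -- G₁, G₂ nonconstant in ζ
    (hG₁nc : ∀ t, ∃ z₁ ∈ Metric.ball (0 : ℂ) 1, ∃ z₂ ∈ Metric.ball (0 : ℂ) 1,
      G₁ (z₁, t) ≠ G₁ (z₂, t))
    (hG₂nc : ∀ t, ∃ z₁ ∈ Metric.ball (0 : ℂ) 1, ∃ z₂ ∈ Metric.ball (0 : ℂ) 1,
      G₂ (z₁, t) ≠ G₂ (z₂, t))
    -- J¹ ≡ J² ≡ J³ ≡ 0 on Δ × M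
    (hJ1 : ∀ p ∈ Metric.ball (0 : ℂ) 1 ×ˢ (Set.univ : Set (ℝ × ℝ × ℝ)),
      minor3 dPsi dT2 dT3 G₁ G₂ F p = 0)
    (hJ2 : ∀ p ∈ Metric.ball (0 : ℂ) 1 ×ˢ (Set.univ : Set (ℝ × ℝ × ℝ)),
      minor3 dPsi dT1 dT3 G₁ G₂ F p = 0)
    (hJ3 : ∀ p ∈ Metric.ball (0 : ℂ) 1 ×ˢ (Set.univ : Set (ℝ × ℝ × ℝ)),
      minor3 dPsi dT1 dT2 G₁ G₂ F p = 0) :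
    -- then J⁰ ≡ 0 on Δ × M
    ∀ p ∈ Metric.ball (0 : ℂ) 1 ×ˢ (Set.univ : Set (ℝ × ℝ × ℝ)),
      minor3 dT1 dT2 dT3 G₁ G₂ F p = 0 := by
  rintro ⟨z₀, t⟩ ⟨hz₀, -⟩
  set g : ℂ → ℂ := fun z => G₁ (z, t) with hg
  set J : ℂ → ℂ := fun z => minor3 dT1 dT2 dT3 G₁ G₂ F (z, t) with hJdef
  -- key pointwise relation
  have key : ∀ z ∈ Metric.ball (0 : ℂ) 1, Complex.I * z * deriv g z * J z = 0 := by
    intro z hz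
    have hmem : (z, t) ∈ Metric.ball (0 : ℂ) 1 ×ˢ (Set.univ : Set (ℝ × ℝ × ℝ)) :=
      ⟨hz, Set.mem_univ t⟩
    have := cofact G₁ G₂ F (z, t)
    rw [hJ1 _ hmem, hJ2 _ hmem, hJ3 _ hmem] at this
    simp only [mul_zero, sub_zero, add_zero] at this
    have hd := dPsi_eq G₁ hG₁ hG₁hol t hz
    calc Complex.I * z * deriv g z * J z
        = dPsi G₁ (z, t) * minor3 dT1 dT2 dT3 G₁ G₂ F (z, t) := by
          simp only [dPsi, hd, hJdef]; rfl
      _ = 0 := this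
  -- continuity of J in z
  have hJcont : ContinuousOn J (Metric.ball (0 : ℂ) 1) := by
    have h1 : ContinuousOn (fun z : ℂ => (z, t)) (Metric.ball (0 : ℂ) 1) :=
      (continuous_id.prodMk continuous_const).continuousOn
    exact (cont_minor G₁ G₂ F hG₁ hG₂ hF).comp h1 fun z hz => ⟨hz, Set.mem_univ t⟩
  by_contra hne
  -- get a small ball where J ≠ 0
  have hca : ContinuousAt J z₀ :=
    hJcont.continuousAt (Metric.isOpen_ball.mem_nhds hz₀)
  have hev : ∀ᶠ z in nhds z₀, J z ≠ 0 ∧ z ∈ Metric.ball (0 : ℂ) 1 :=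
    (hca.eventually_ne hne).and (Metric.isOpen_ball.eventually_mem hz₀)
  obtain ⟨ε, hε, hball⟩ := Metric.eventually_nhds_iff.mp hev
  -- deriv g vanishes off 0 near z₀
  have hdg : ∀ z ∈ Metric.ball z₀ ε, z ≠ 0 → deriv g z = 0 := by
    intro z hz hz0
    obtain ⟨hJz, hzball⟩ := hball (Metric.mem_ball.mp hz)
    have := key z hzball
    have hI : Complex.I * z ≠ 0 := mul_ne_zero Complex.I_ne_zero hz0
    rcases mul_eq_zero.mp this with h | h
    · rcases mul_eq_zero.mp h with h' | h'
      · exact absurd h' hI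
      · exact h'
    · exact absurd h hJz
  -- pick a nonzero point w in ball z₀ ε
  obtain ⟨w, hw1, hw2⟩ : ∃ w, w ∈ Metric.ball z₀ ε ∧ w ≠ 0 := by
    by_cases h0 : z₀ = 0
    · refine ⟨(ε / 2 : ℝ), ?_, ?_⟩
      · rw [h0, Metric.mem_ball, dist_zero_right]
        simp [abs_of_pos hε]
        linarith
      · simpa using ne_of_gt (half_pos hε)
    · exact ⟨z₀, Metric.mem_ball_self hε, h0⟩
  have hwball : w ∈ Metric.ball (0 : ℂ) 1 := (hball (Metric.mem_ball.mp hw1)).2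
  -- deriv g = 0 eventually near w
  have hopen : IsOpen (Metric.ball z₀ ε \ {0}) :=
    Metric.isOpen_ball.sdiff isClosed_singleton
  have hevw : deriv g =ᶠ[nhds w] 0 :=
    Filter.eventually_of_mem (hopen.mem_nhds ⟨hw1, hw2⟩)
      (fun z hz => hdg z hz.1 hz.2)
  -- identity theorem: deriv g ≡ 0 on the unit ball
  have han : AnalyticOnNhd ℂ g (Metric.ball 0 1) :=
    (hG₁hol t).analyticOnNhd Metric.isOpen_ball
  have hzero : Set.EqOn (deriv g) 0 (Metric.ball (0 : ℂ) 1) :=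
    han.deriv.eqOn_zero_of_preconnected_of_eventuallyEq_zero
      (convex_ball (0 : ℂ) 1).isPreconnected hwball hevw
  -- hence g is constant on the ball, contradicting nonconstancy
  obtain ⟨z₁, hz₁, z₂, hz₂, hneq⟩ := hG₁nc t
  have hconst : g z₁ = g z₂ := by
    refine (convex_ball (0 : ℂ) 1).is_const_of_fderivWithin_eq_zero
      (hG₁hol t) (fun x hx => ?_) hz₁ hz₂
    rw [fderivWithin_of_isOpen Metric.isOpen_ball hx]
    apply ContinuousLinearMap.ext_ring
    rw [fderiv_apply_one_eq_deriv, hzero hx]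
    rfl
  exact hneq hconst

end
end

section
/- Let J : cl(Σ) → ℂ and G : cl(Σ) → ℂⁿ be C¹ (Σ = Δ×M), and let b ∈ ℂⁿ be such that J⁻¹(0) ∩ G⁻¹(b) = ∅ and G⁻¹(b) is a finite union of C¹ curves in cl(Σ) whose endpoints lie on bΣ = ∂Δ×M. Suppose Θ = J/J̄ is G-compatible on bΣ away from zeros of J (Θ = σ ∘ G for some function σ), so that Θ takes equal values at the endpoints of each component of G⁻¹(b). Then Z(b) = (1/2πi) ∫_{G⁻¹(b)} (dJ/J − dJ̄/J̄) is an integer; equivalently, Z(b) = (1/2π) · (total variation of arg Θ along G⁻¹(b)) ∈ ℤ. -/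
/-!
STATEMENT 15: Let J : cl(Σ) → ℂ and G : cl(Σ) → ℂⁿ be C¹ (Σ = Δ×M, M a compact manifold),
and let b ∈ ℂⁿ be such that J⁻¹(0) ∩ G⁻¹(b) = ∅ and G⁻¹(b) is a finite union of C¹ curves
in cl(Σ) whose endpoints lie on bΣ = ∂Δ×M.  Suppose Θ = J/J̄ is G-compatible on bΣ away
from zeros of J (Θ = σ ∘ G for some function σ), so that Θ takes equal values at the
endpoints of each component of G⁻¹(b).  Then
  Z(b) = (1/2πi) ∫_{G⁻¹(b)} (dJ/J − dJ̄/J̄)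
is an integer.
(The curves making up `G⁻¹(b)` are given explicitly as data `γ i : [0,1] → cl(Σ)`; the only
differentiability required for the line integral is that of `J ∘ γ i`.)
-/

open MeasureTheory Set Complex

lemma winding_key (f : ℝ → ℂ) (hf : ContDiff ℝ 1 f)
    (hne : ∀ s ∈ Set.Icc (0:ℝ) 1, f s ≠ 0)
    (hend : f 0 / (starRingEnd ℂ) (f 0) = f 1 / (starRingEnd ℂ) (f 1)) :
    ∃ k : ℤ, (∫ s in (0:ℝ)..1,
      (deriv f s / f s - deriv (fun u => (starRingEnd ℂ) (f u)) s / (starRingEnd ℂ) (f s)))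
      = (k : ℂ) * (2 * Real.pi * Complex.I) := by
  have hfd : Differentiable ℝ f := hf.differentiable one_ne_zero
  have hfc : Continuous f := hf.continuous
  set h : ℝ → ℂ := fun s => deriv f s / f s with hh
  have hdc : Continuous (deriv f) := hf.continuous_deriv le_rfl
  have hmeas : Measurable h := (measurable_deriv f).div hfc.measurable
  have hcontAt : ∀ x ∈ Icc (0:ℝ) 1, ContinuousAt h x := fun x hx =>
    (hdc.continuousAt).div hfc.continuousAt (hne x hx)
  have hcontOn : ContinuousOn h (Icc 0 1) := fun x hx => (hcontAt x hx).continuousWithinAt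
  have hint : ∀ x ∈ Icc (0:ℝ) 1, IntervalIntegrable h volume 0 x := by
    intro x hx
    apply (hcontOn.mono _).intervalIntegrable
    rw [uIcc_of_le hx.1]
    exact Icc_subset_Icc le_rfl hx.2
  set F : ℝ → ℂ := fun u => ∫ t in (0:ℝ)..u, h t with hF
  -- F has right derivative h x on [0,1)
  have hFd : ∀ x ∈ Ico (0:ℝ) 1, HasDerivWithinAt F (h x) (Ici x) x := by
    intro x hx
    exact intervalIntegral.integral_hasDerivWithinAt_right (hint x ⟨hx.1, hx.2.le⟩)
      (hmeas.stronglyMeasurable.stronglyMeasurableAtFilter)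
      ((hcontAt x ⟨hx.1, hx.2.le⟩).continuousWithinAt)
  have hIntOn : IntegrableOn h (uIcc (0:ℝ) 1) volume := by
    rw [uIcc_of_le (zero_le_one' ℝ)]; exact hcontOn.integrableOn_Icc
  have hFcont : ContinuousOn F (Icc 0 1) := by
    simpa [uIcc_of_le (zero_le_one' ℝ)] using
      intervalIntegral.continuousOn_primitive_interval hIntOn
  -- g = exp(-F) * f is constant on [0,1]
  set g : ℝ → ℂ := fun s => Complex.exp (-F s) * f s with hg
  have hgcont : ContinuousOn g (Icc 0 1) :=
    ((hFcont.neg).cexp).mul hfc.continuousOn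
  have hgconst : ∀ x ∈ Icc (0:ℝ) 1, g x = g 0 := by
    apply constant_of_has_deriv_right_zero hgcont
    intro x hx
    have h1 : HasDerivWithinAt (fun s => Complex.exp (-F s))
        (Complex.exp (-F x) * (-h x)) (Ici x) x := ((hFd x hx).neg).cexp
    have h2 : HasDerivWithinAt f (deriv f x) (Ici x) x :=
      (hfd x).hasDerivAt.hasDerivWithinAt
    have h3 := h1.mul h2
    have hzero : Complex.exp (-F x) * -h x * f x + Complex.exp (-F x) * deriv f x = 0 := by
      have hfx : f x ≠ 0 := hne x ⟨hx.1, hx.2.le⟩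
      have hhf : h x * f x = deriv f x := by simp only [hh]; exact div_mul_cancel₀ _ hfx
      linear_combination (-Complex.exp (-F x)) * hhf
    rwa [hzero] at h3
  have hkey : f 1 = Complex.exp (F 1) * f 0 := by
    have h01 := hgconst 1 ⟨zero_le_one, le_rfl⟩
    have hF0 : F 0 = 0 := intervalIntegral.integral_same
    simp only [hg, hF0, neg_zero, Complex.exp_zero, one_mul] at h01
    have h2 : f 1 = Complex.exp (F 1) * (Complex.exp (-F 1) * f 1) := by
      rw [← mul_assoc, ← Complex.exp_add]; simp
    rw [h2, h01]
  -- exp(F 1 - conj (F 1)) = 1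
  set A := F 1 with hA
  have hf0 := hne 0 ⟨le_rfl, zero_le_one⟩
  have hf1 := hne 1 ⟨zero_le_one, le_rfl⟩
  have hcf0 : (starRingEnd ℂ) (f 0) ≠ 0 := by simpa using hf0
  have hcf1 : (starRingEnd ℂ) (f 1) ≠ 0 := by simpa using hf1
  have hexp1 : Complex.exp (A - (starRingEnd ℂ) A) = 1 := by
    have hcconj : Complex.exp ((starRingEnd ℂ) A) = (starRingEnd ℂ) (Complex.exp A) :=
      Complex.exp_conj A
    have hER : Complex.exp A = f 1 / f 0 := by
      rw [hkey]; field_simp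
    have hconjkey : (starRingEnd ℂ) (Complex.exp A) = (starRingEnd ℂ) (f 1) / (starRingEnd ℂ) (f 0) := by
      rw [hER, map_div₀]
    rw [Complex.exp_sub, hcconj, hconjkey, hER]
    rw [div_eq_div_iff hcf0 hcf1] at hend
    field_simp
    first
      | linear_combination hend
      | linear_combination -hend
      | linear_combination (f 1) * hend
      | ring_nf; linear_combination hend
  obtain ⟨k, hk⟩ := Complex.exp_eq_one_iff.mp hexp1
  refine ⟨k, ?_⟩
  -- rewrite integrand
  have hcongr : ∀ s ∈ uIcc (0:ℝ) 1,
      (deriv f s / f s - deriv (fun u => (starRingEnd ℂ) (f u)) s / (starRingEnd ℂ) (f s))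
        = h s - (starRingEnd ℂ) (h s) := by
    intro s hs
    have hds : deriv (fun u => (starRingEnd ℂ) (f u)) s = (starRingEnd ℂ) (deriv f s) :=
      ((hfd s).hasDerivAt.star).deriv
    rw [hds, hh]
    simp [map_div₀]
  rw [intervalIntegral.integral_congr hcongr]
  have hint1 : IntervalIntegrable h volume 0 1 := hint 1 ⟨zero_le_one, le_rfl⟩
  have hint2 : IntervalIntegrable (fun s => (starRingEnd ℂ) (h s)) volume 0 1 := by
    exact (Complex.continuous_conj.comp_continuousOn
      (hcontOn.mono (by rw [uIcc_of_le (zero_le_one' ℝ)]))).intervalIntegrable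
  rw [intervalIntegral.integral_sub hint1 hint2]
  have hconjint : ∫ s in (0:ℝ)..1, (starRingEnd ℂ) (h s) = (starRingEnd ℂ) (∫ s in (0:ℝ)..1, h s) := by
    simp [intervalIntegral, integral_conj]
  rw [hconjint]
  exact hk


theorem stmt_15 (n : ℕ) (M : Type*) [TopologicalSpace M] [CompactSpace M]
    (J : ℂ × M → ℂ) (G : ℂ × M → EuclideanSpace ℂ (Fin n))
    (b : EuclideanSpace ℂ (Fin n))
    (hJcont : Continuous J) (hGcont : Continuous G)
    -- J⁻¹(0) ∩ G⁻¹(b) = ∅ (on cl(Σ))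
    (hJG : ∀ p : ℂ × M, p.1 ∈ Metric.closedBall (0 : ℂ) 1 → G p = b → J p ≠ 0)
    -- G⁻¹(b) is a finite union of C¹ curves with endpoints on bΣ
    (N : ℕ) (γ : Fin N → ℝ → ℂ × M)
    (hγcont : ∀ i, ContinuousOn (γ i) (Set.Icc 0 1))
    (hγmem : ∀ i, ∀ s ∈ Set.Icc (0 : ℝ) 1, (γ i s).1 ∈ Metric.closedBall (0 : ℂ) 1)
    (hγC1 : ∀ i, ContDiff ℝ 1 (fun s => J (γ i s)))
    (hγend0 : ∀ i, (γ i 0).1 ∈ Metric.sphere (0 : ℂ) 1)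
    (hγend1 : ∀ i, (γ i 1).1 ∈ Metric.sphere (0 : ℂ) 1)
    (hγcover : {p : ℂ × M | p.1 ∈ Metric.closedBall (0 : ℂ) 1 ∧ G p = b} =
      ⋃ i, (γ i) '' Set.Icc 0 1)
    -- Θ = J/J̄ is G-compatible on bΣ away from zeros of J
    (hcompat : ∀ p q : ℂ × M, p.1 ∈ Metric.sphere (0 : ℂ) 1 → q.1 ∈ Metric.sphere (0 : ℂ) 1 →
      J p ≠ 0 → J q ≠ 0 → G p = G q →
      J p / (starRingEnd ℂ) (J p) = J q / (starRingEnd ℂ) (J q)) :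
    ∃ m : ℤ,
      (1 / (2 * Real.pi * Complex.I)) *
        ∑ i : Fin N, ∫ s in (0 : ℝ)..1,
          (deriv (fun u => J (γ i u)) s / J (γ i s) -
            deriv (fun u => (starRingEnd ℂ) (J (γ i u))) s / (starRingEnd ℂ) (J (γ i s))) =
        (m : ℂ) := by
  -- facts about each curve
  have hmemset : ∀ i, ∀ s ∈ Set.Icc (0:ℝ) 1,
      (γ i s).1 ∈ Metric.closedBall (0 : ℂ) 1 ∧ G (γ i s) = b := by
    intro i s hs
    have : γ i s ∈ ⋃ j, (γ j) '' Set.Icc (0:ℝ) 1 :=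
      Set.mem_iUnion.mpr ⟨i, Set.mem_image_of_mem _ hs⟩
    rwa [← hγcover] at this
  have hne : ∀ i, ∀ s ∈ Set.Icc (0:ℝ) 1, J (γ i s) ≠ 0 := fun i s hs =>
    hJG _ (hmemset i s hs).1 (hmemset i s hs).2
  have hend : ∀ i, J (γ i 0) / (starRingEnd ℂ) (J (γ i 0)) =
      J (γ i 1) / (starRingEnd ℂ) (J (γ i 1)) := by
    intro i
    exact hcompat _ _ (hγend0 i) (hγend1 i)
      (hne i 0 ⟨le_rfl, zero_le_one⟩) (hne i 1 ⟨zero_le_one, le_rfl⟩)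
      ((hmemset i 0 ⟨le_rfl, zero_le_one⟩).2.trans (hmemset i 1 ⟨zero_le_one, le_rfl⟩).2.symm)
  choose k hk using fun i => winding_key (fun s => J (γ i s)) (hγC1 i) (hne i) (hend i)
  refine ⟨∑ i, k i, ?_⟩
  have hsum : ∑ i : Fin N, (∫ s in (0 : ℝ)..1,
        (deriv (fun u => J (γ i u)) s / J (γ i s) -
          deriv (fun u => (starRingEnd ℂ) (J (γ i u))) s / (starRingEnd ℂ) (J (γ i s))))
      = (∑ i, (k i : ℂ)) * (2 * Real.pi * Complex.I) := by
    rw [Finset.sum_congr rfl (fun i _ => hk i), ← Finset.sum_mul]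
  rw [hsum]
  have hpi : (2 * (Real.pi : ℂ) * Complex.I) ≠ 0 := by
    simp [Real.pi_ne_zero, Complex.I_ne_zero]
  push_cast
  field_simp
end
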